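/- arXiv:1701.04708 — 7 statements merged into one kernel-verified Lean document; each statement's English description precedes it below -/
import Mathlib

section
/- Let σ = (ρ, a+ib, a−ib, 0) with b ≠ 0 and α = (ρ+2a)/4 ≥ 0. If 4s₂ ≥ s₁², where s₁ = ρ + 2a and s₂ = ρ² + 2(a² − b²), and ρ ≥ 2a, then the trace-zero monic degree-4 polynomial whose roots are ρ−α, a−α±ib, −α has all non-leading coefficients ≤ 0, so its companion matrix C is nonnegative and σ is realized by the nonnegative matrix αI₄ + C. -/
set_option maxHeartbeats 1000000 in
open Polynomial in
/-- Let `σ = (ρ, a+ib, a-ib, 0)` with `b ≠ 0` and `α = (ρ+2a)/4 ≥ 0`. If `4s₂ ≥ s₁²`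
(with `s₁ = ρ + 2a`, `s₂ = ρ² + 2(a² - b²)`) and `ρ ≥ 2a`, then the trace-zero monic
quartic `g` with roots `ρ-α, a-α±ib, -α` has all non-leading coefficients `≤ 0`, its
companion matrix `Cm` is entrywise nonnegative, and `αI₄ + Cm` realizes `σ` (i.e. its
characteristic polynomial is `(x-ρ)(x²-2ax+a²+b²)x`). -/
theorem stmt3 (ρ a b : ℝ) (hb : b ≠ 0) (α : ℝ) (hα : α = (ρ + 2*a)/4) (hα0 : 0 ≤ α)
    (hJLL : 4 * (ρ^2 + 2*(a^2 - b^2)) ≥ (ρ + 2*a)^2) (hρ : ρ ≥ 2*a)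
    (g : Polynomial ℝ)
    (hg : g = (X - C (ρ - α)) * (X^2 - C (2*(a - α)) * X + C ((a - α)^2 + b^2)) *
      (X + C α))
    (Cm : Matrix (Fin 4) (Fin 4) ℝ)
    (hCm : Cm = Matrix.of fun (i j : Fin 4) =>
      if (i : ℕ) = 3 then -g.coeff (j : ℕ)
      else if (j : ℕ) = (i : ℕ) + 1 then 1 else 0) :
    (∀ k < 4, g.coeff k ≤ 0) ∧ (∀ i j, 0 ≤ Cm i j) ∧
    (α • (1 : Matrix (Fin 4) (Fin 4) ℝ) + Cm).charpoly =
      (X - C ρ) * (X^2 - C (2*a) * X + C (a^2 + b^2)) * X := by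
  -- explicit expanded form of g
  set c0 : ℝ := -(α*(ρ-α)*((a-α)^2+b^2)) with hc0def
  set c1 : ℝ := 2*(a-α)*((a-α)^2+b^2 + α*(ρ-α)) with hc1def
  set c2 : ℝ := (a-α)^2+b^2 + 2*(ρ-α)*(a-α) - α^2 with hc2def
  have hgexp : g = X^4 + C c2 * X^2 + C c1 * X + C c0 := by
    rw [hg]
    apply Polynomial.funext
    intro x
    simp only [eval_mul, eval_add, eval_sub, eval_pow, eval_X, eval_C, eval_neg]
    rw [hc0def, hc1def, hc2def, hα]
    ring
  have h0 : g.coeff 0 = c0 := by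
    rw [hgexp]; simp [coeff_add, coeff_C_mul, coeff_X_pow, coeff_C, coeff_X]
  have h1 : g.coeff 1 = c1 := by
    rw [hgexp]; simp [coeff_add, coeff_C_mul, coeff_X_pow, coeff_C, coeff_X]
  have h2 : g.coeff 2 = c2 := by
    rw [hgexp]; simp [coeff_add, coeff_C_mul, coeff_X_pow, coeff_C, coeff_X]
  have h3 : g.coeff 3 = 0 := by
    rw [hgexp]; simp [coeff_add, coeff_C_mul, coeff_X_pow, coeff_C, coeff_X]
  -- sign facts
  have hρ0 : 0 ≤ ρ := by nlinarith [hα0, hρ]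
  have hp0 : 0 ≤ ρ - α := by rw [hα]; nlinarith
  have hm0 : a - α ≤ 0 := by rw [hα]; nlinarith
  have hc0 : c0 ≤ 0 := by
    rw [hc0def]
    have : 0 ≤ α*(ρ-α)*((a-α)^2+b^2) := by positivity
    linarith
  have hc1 : c1 ≤ 0 := by
    rw [hc1def]
    have h1 : 0 ≤ (a-α)^2+b^2 + α*(ρ-α) := by positivity
    nlinarith
  have hc2 : c2 ≤ 0 := by rw [hc2def, hα]; nlinarith
  refine ⟨?_, ?_, ?_⟩
  · intro k hk
    interval_cases k <;> simp [h0, h1, h2, h3, hc0, hc1, hc2]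
  · intro i j
    rw [hCm]
    simp only [Matrix.of_apply]
    split_ifs with hi hj
    · fin_cases j <;> simp [h0, h1, h2, h3] <;> linarith
    · norm_num
    · norm_num
  · unfold Matrix.charpoly
    simp only [Matrix.det_succ_row_zero, Fin.sum_univ_succ, Fin.sum_univ_zero,
      Matrix.charmatrix_apply, hCm, Matrix.submatrix_apply, Matrix.add_apply, Matrix.smul_apply,
      Matrix.one_apply, Matrix.of_apply, Matrix.det_unique, Matrix.diagonal_apply]
    norm_num [Fin.succ, Fin.succAbove, Fin.lt_def, Fin.ext_iff, h0, h1, h2, h3]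
    apply Polynomial.funext
    intro x
    simp only [eval_mul, eval_add, eval_sub, eval_pow, eval_X, eval_C, eval_neg, eval_one,
      eval_zero]
    rw [hc0def, hc1def, hc2def, hα]
    ring
end

section
/- Let σ = (ρ, a+ib, a−ib, 0) with b ≠ 0, α = (ρ+2a)/4 ≥ 0, and suppose σ is realized as αI₄ + C with C a nonnegative trace-zero companion matrix. Then ρ ≥ 2a. -/
open Polynomial in
/-- If `σ = (ρ, a+ib, a-ib, 0)` (with `b ≠ 0`, `α = (ρ+2a)/4 ≥ 0`) is realized as
`αI₄ + Cm` where `Cm` is a nonnegative trace-zero companion matrix, then `ρ ≥ 2a`. -/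
theorem stmt4 (ρ a b : ℝ) (hb : b ≠ 0) (α : ℝ) (hα : α = (ρ + 2*a)/4) (hα0 : 0 ≤ α)
    (c : Fin 4 → ℝ) (Cm : Matrix (Fin 4) (Fin 4) ℝ)
    (hCm : Cm = Matrix.of fun (i j : Fin 4) =>
      if (i : ℕ) = 3 then c j
      else if (j : ℕ) = (i : ℕ) + 1 then 1 else 0)
    (hpos : ∀ i j, 0 ≤ Cm i j) (htr : Cm.trace = 0)
    (hchar : (α • (1 : Matrix (Fin 4) (Fin 4) ℝ) + Cm).charpoly =
      (X - C ρ) * (X^2 - C (2*a) * X + C (a^2 + b^2)) * X) :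
    ρ ≥ 2*a := by
  subst hCm
  have e0 : ((0:Fin 4):ℕ) = 0 := rfl
  have e1 : ((1:Fin 4):ℕ) = 1 := rfl
  have e2 : ((2:Fin 4):ℕ) = 2 := rfl
  have e3 : ((3:Fin 4):ℕ) = 3 := rfl
  -- the charpoly of the shifted companion matrix
  have hm : (α • (1 : Matrix (Fin 4) (Fin 4) ℝ) + Matrix.of fun (i j : Fin 4) =>
      if (i : ℕ) = 3 then c j
      else if (j : ℕ) = (i : ℕ) + 1 then 1 else 0).charmatrix =
      !![X - C α, -1, 0, 0; 0, X - C α, -1, 0; 0, 0, X - C α, -1;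
         -C (c 0), -C (c 1), -C (c 2), X - C α - C (c 3)] := by
    apply Matrix.ext; intro i j
    fin_cases i <;> fin_cases j <;>
      norm_num [Matrix.charmatrix_apply, Matrix.one_apply, Matrix.diagonal,
        Fin.ext_iff, e0, e1, e2, e3]
    all_goals try ring
    all_goals rfl
  have key : (α • (1 : Matrix (Fin 4) (Fin 4) ℝ) + Matrix.of fun (i j : Fin 4) =>
      if (i : ℕ) = 3 then c j
      else if (j : ℕ) = (i : ℕ) + 1 then 1 else 0).charpoly =
      (X - C α)^4 - C (c 3) * (X - C α)^3 - C (c 2) * (X - C α)^2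
        - C (c 1) * (X - C α) - C (c 0) := by
    rw [Matrix.charpoly, hm, Matrix.det_succ_row_zero]
    have hs : Fin.succAbove (1:Fin 4) 2 = 3 := rfl
    simp [Fin.sum_univ_succ, Matrix.det_fin_three, hs]
    ring
  -- expand both sides into monomial form
  have heq : X^4 + C (-(4*α + c 3)) * X^3 + C (6*α^2 + 3*α*(c 3) - c 2) * X^2
      + C (-(4*α^3 + 3*α^2*(c 3)) + 2*α*(c 2) - c 1) * X
      + C (α^4 + α^3*(c 3) - α^2*(c 2) + α*(c 1) - c 0) =
      X^4 + C (-(ρ + 2*a)) * X^3 + C (a^2 + b^2 + 2*a*ρ) * X^2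
      + C (-(ρ*(a^2 + b^2))) * X + C 0 := by
    calc X^4 + C (-(4*α + c 3)) * X^3 + C (6*α^2 + 3*α*(c 3) - c 2) * X^2
        + C (-(4*α^3 + 3*α^2*(c 3)) + 2*α*(c 2) - c 1) * X
        + C (α^4 + α^3*(c 3) - α^2*(c 2) + α*(c 1) - c 0)
        = (X - C α)^4 - C (c 3) * (X - C α)^3 - C (c 2) * (X - C α)^2
          - C (c 1) * (X - C α) - C (c 0) := by
          simp only [map_add, map_mul, map_sub, map_neg, map_pow, map_ofNat]
          ring
      _ = (X - C ρ) * (X^2 - C (2*a) * X + C (a^2 + b^2)) * X := key ▸ hchar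
      _ = X^4 + C (-(ρ + 2*a)) * X^3 + C (a^2 + b^2 + 2*a*ρ) * X^2
          + C (-(ρ*(a^2 + b^2))) * X + C 0 := by
          simp only [map_add, map_mul, map_sub, map_neg, map_pow, map_ofNat, map_zero]
          ring
  have h3 := congrArg (fun p => p.coeff 3) heq
  have h2 := congrArg (fun p => p.coeff 2) heq
  have h1 := congrArg (fun p => p.coeff 1) heq
  simp only [coeff_add, coeff_C_mul, coeff_X_pow, coeff_C, coeff_X] at h3 h2 h1
  norm_num at h3 h2 h1
  -- nonnegativity of the matrix entry c 1
  have hc1 : 0 ≤ c 1 := by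
    have := hpos 3 1
    simpa [e3] using this
  have hb2 : 0 < b^2 := by positivity
  -- trace condition gives c 3 = 0
  have hc3 : c 3 = 0 := by
    have := htr
    simpa [Matrix.trace, Matrix.diag, Fin.sum_univ_four, e0, e1, e2, e3] using this
  subst hα
  rw [hc3] at h1 h2
  have hc2 : c 2 = 6*((ρ+2*a)/4)^2 - (a^2+b^2+2*a*ρ) := by linarith
  rw [hc2] at h1
  have hc1e : c 1 = (ρ-2*a)*(ρ^2+4*b^2)/8 := by linear_combination -1 * h1
  by_contra hcon
  push_neg at hcon
  have hp : (0:ℝ) < ρ^2 + 4*b^2 := by positivity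
  nlinarith [mul_pos (show (0:ℝ) < 2*a - ρ by linarith) hp]
end

section
/- Let ρ > 0, a > 0, b > 0 with a² + b² = 1, and suppose that for all sufficiently large N the trace-zero monic degree-N polynomial with roots ρ − α, a − α ± ib, and −α (with multiplicity N−3), where α = (ρ+2a)/N, has all non-leading coefficients ≤ 0 (i.e., its companion matrix is nonnegative). Then ρ ≥ 2a. -/
set_option maxHeartbeats 1000000
open Polynomial

lemma chCast (N k : ℕ) (h : 3 + k ≤ N) :
    (((N-3).choose (N-(3+k)) : ℕ):ℝ) * (k.factorial : ℝ)
      = ∏ i ∈ Finset.range k, ((N:ℝ)-3-i) := by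
  have h1 : N - (3+k) = (N-3) - k := by omega
  rw [h1, Nat.choose_symm (by omega)]
  have h2 : (((N-3).descFactorial k : ℕ) : ℝ) = ((k.factorial:ℕ):ℝ) * ((N-3).choose k : ℝ) := by
    exact_mod_cast congrArg (Nat.cast (R := ℝ)) (Nat.descFactorial_eq_factorial_mul_choose (N-3) k)
  have h3 : (((N - 3).descFactorial k : ℕ) : ℝ) = ∏ i ∈ Finset.range k, ((N:ℝ) - 3 - i) := by
    clear h1 h2
    induction k with
    | zero => simp
    | succ k ih =>
      rw [Nat.descFactorial_succ, Finset.prod_range_succ]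
      push_cast
      rw [ih (by omega), Nat.cast_sub (by omega), Nat.cast_sub (by omega)]
      ring
  rw [← h3, h2]; push_cast; ring

noncomputable def Gf (ρ a b t : ℝ) : ℝ :=
  (-((ρ - (ρ+2*a)*t)*((a - (ρ+2*a)*t)^2+b^2))) * ((ρ+2*a)*(1-3*t))
  + ((a - (ρ+2*a)*t)^2+b^2+2*(a - (ρ+2*a)*t)*(ρ - (ρ+2*a)*t)) * ((ρ+2*a)^2*(1-3*t)*(1-4*t)/2)
  + (-((ρ - (ρ+2*a)*t)+2*(a - (ρ+2*a)*t))) * ((ρ+2*a)^3*(1-3*t)*(1-4*t)*(1-5*t)/6)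
  + (ρ+2*a)^4*(1-3*t)*(1-4*t)*(1-5*t)*(1-6*t)/24

lemma coeff_eq (ρ a b : ℝ) (N : ℕ) (hN : 7 ≤ N) :
    (((X - C (ρ - (ρ + 2*a)/(N : ℝ))) *
        (X^2 - C (2*(a - (ρ + 2*a)/(N : ℝ))) * X +
          C ((a - (ρ + 2*a)/(N : ℝ))^2 + b^2)) *
        (X + C ((ρ + 2*a)/(N : ℝ)))^(N - 3) : Polynomial ℝ).coeff (N-4))
      = Gf ρ a b (1/(N:ℝ)) := by
  set α : ℝ := (ρ + 2*a)/(N : ℝ) with hα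
  have hQ : ((X - C (ρ - α)) * (X^2 - C (2*(a - α)) * X + C ((a - α)^2+b^2)) : Polynomial ℝ)
      = X^3 + C (-(2*(a-α)+(ρ-α)))*X^2 + C ((a-α)^2+b^2+2*(a-α)*(ρ-α))*X
        + C (-((ρ-α)*((a-α)^2+b^2))) := by
    simp only [C_mul, C_add, C_neg, C_pow, map_ofNat]
    ring
  rw [hQ]
  set R : Polynomial ℝ := (X + C α)^(N-3) with hR
  have hRc : ∀ j, R.coeff j = α ^ (N-3-j) * (((N-3).choose j : ℕ) : ℝ) := fun j =>
    coeff_X_add_C_pow α (N-3) j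
  have e3 : N - 4 = (N-7) + 3 := by omega
  have e2 : N - 4 = (N-6) + 2 := by omega
  have e1 : N - 4 = (N-5) + 1 := by omega
  rw [add_mul, add_mul, add_mul, coeff_add, coeff_add, coeff_add]
  rw [mul_assoc, mul_assoc, coeff_C_mul, coeff_C_mul, coeff_C_mul]
  nth_rewrite 1 [e3]
  nth_rewrite 1 [e2]
  nth_rewrite 1 [e1]
  rw [coeff_X_pow_mul, coeff_X_pow_mul, coeff_X_mul]
  rw [hRc, hRc, hRc, hRc]
  have s1 : N - 3 - (N-7) = 4 := by omega
  have s2 : N - 3 - (N-6) = 3 := by omega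
  have s3 : N - 3 - (N-5) = 2 := by omega
  have s4 : N - 3 - (N-4) = 1 := by omega
  rw [s1, s2, s3, s4]
  have c1 := chCast N 1 (by omega)
  have c2 := chCast N 2 (by omega)
  have c3 := chCast N 3 (by omega)
  have c4 := chCast N 4 (by omega)
  simp only [Finset.prod_range_succ, Finset.prod_range_zero, Nat.factorial] at c1 c2 c3 c4
  push_cast at c1 c2 c3 c4
  have h7 : N - 7 = N - (3+4) := by omega
  have h6 : N - 6 = N - (3+3) := by omega
  have h5 : N - 5 = N - (3+2) := by omega
  have h4 : N - 4 = N - (3+1) := by omega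
  rw [h7, h6, h5]
  rw [h4]
  have hN0 : (N:ℝ) ≠ 0 := by positivity
  have hc1 : (((N-3).choose (N-(3+1)) : ℕ):ℝ) = (N:ℝ) - 3 := by linarith
  have hc2 : (((N-3).choose (N-(3+2)) : ℕ):ℝ) = (((N:ℝ)-3)*((N:ℝ)-4))/2 := by linarith
  have hc3 : (((N-3).choose (N-(3+3)) : ℕ):ℝ) = (((N:ℝ)-3)*((N:ℝ)-4)*((N:ℝ)-5))/6 := by
    field_simp at c3 ⊢; linarith
  have hc4 : (((N-3).choose (N-(3+4)) : ℕ):ℝ) = (((N:ℝ)-3)*((N:ℝ)-4)*((N:ℝ)-5)*((N:ℝ)-6))/24 := by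
    field_simp at c4 ⊢; linarith
  rw [hc1, hc2, hc3, hc4]
  set u : ℝ := 1/(N:ℝ) with hu
  have hαu : α = (ρ+2*a)*u := by rw [hα, hu]; ring
  have L1 : ((ρ+2*a)*u) * ((N:ℝ)-3) = (ρ+2*a)*(1-3*u) := by
    rw [hu]; field_simp; try ring
  have L2 : ((ρ+2*a)*u)^2 * ((((N:ℝ)-3)*((N:ℝ)-4))/2) = (ρ+2*a)^2*(1-3*u)*(1-4*u)/2 := by
    rw [hu]; field_simp; try ring
  have L3 : ((ρ+2*a)*u)^3 * ((((N:ℝ)-3)*((N:ℝ)-4)*((N:ℝ)-5))/6)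
      = (ρ+2*a)^3*(1-3*u)*(1-4*u)*(1-5*u)/6 := by
    rw [hu]; field_simp; try ring
  have L4 : ((ρ+2*a)*u)^4 * ((((N:ℝ)-3)*((N:ℝ)-4)*((N:ℝ)-5)*((N:ℝ)-6))/24)
      = (ρ+2*a)^4*(1-3*u)*(1-4*u)*(1-5*u)*(1-6*u)/24 := by
    rw [hu]; field_simp; try ring
  rw [hαu]
  show _ = Gf ρ a b u
  unfold Gf
  linear_combination L4 + (-(2*(a-(ρ+2*a)*u)+(ρ-(ρ+2*a)*u))) * L3
    + ((a-(ρ+2*a)*u)^2+b^2+2*(a-(ρ+2*a)*u)*(ρ-(ρ+2*a)*u)) * L2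
    + (-((ρ-(ρ+2*a)*u)*((a-(ρ+2*a)*u)^2+b^2))) * L1

open Polynomial in
/-- Let `ρ > 0`, `a > 0`, `b > 0` with `a² + b² = 1`. If for all sufficiently large
`N` the trace-zero monic degree-`N` polynomial with roots `ρ-α`, `a-α±ib` and `-α`
(with multiplicity `N-3`), where `α = (ρ+2a)/N`, has all non-leading coefficients
`≤ 0` (i.e. its companion matrix is nonnegative), then `ρ ≥ 2a`. -/
theorem stmt12 (ρ a b : ℝ) (hρ : 0 < ρ) (ha : 0 < a) (hb : 0 < b)
    (hab : a^2 + b^2 = 1)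
    (h : ∃ N₀ : ℕ, ∀ N : ℕ, N₀ ≤ N → ∀ k < N,
      (((X - C (ρ - (ρ + 2*a)/(N : ℝ))) *
        (X^2 - C (2*(a - (ρ + 2*a)/(N : ℝ))) * X +
          C ((a - (ρ + 2*a)/(N : ℝ))^2 + b^2)) *
        (X + C ((ρ + 2*a)/(N : ℝ)))^(N - 3) : Polynomial ℝ).coeff k) ≤ 0) :
    ρ ≥ 2*a := by
  by_contra hlt
  push_neg at hlt
  obtain ⟨N₀, h⟩ := h
  have hb2 : b^2 = 1 - a^2 := by linarith
  have hG0 : Gf ρ a b 0 = (2*a-ρ)*(2*a+ρ)*(ρ^2+4*b^2)/8 := by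
    unfold Gf; rw [hb2]; ring
  have hpos : 0 < Gf ρ a b 0 := by
    rw [hG0]
    have h1 : 0 < 2*a-ρ := by linarith
    have h2 : 0 < 2*a+ρ := by linarith
    have h3 : 0 < ρ^2+4*b^2 := by positivity
    have := mul_pos (mul_pos h1 h2) h3
    linarith
  have hcont : Continuous (Gf ρ a b) := by unfold Gf; continuity
  have htend : Filter.Tendsto (fun N : ℕ => Gf ρ a b (1/(N:ℝ))) Filter.atTop
      (nhds (Gf ρ a b 0)) :=
    (hcont.tendsto 0).comp tendsto_one_div_atTop_nhds_zero_nat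
  have hev : ∀ᶠ N : ℕ in Filter.atTop, 0 < Gf ρ a b (1/(N:ℝ)) :=
    htend.eventually (eventually_gt_nhds hpos)
  obtain ⟨M, hM⟩ := Filter.eventually_atTop.1 hev
  set N : ℕ := max (max N₀ 7) M with hNdef
  have hN7 : 7 ≤ N := le_trans (le_max_right N₀ 7) (le_max_left _ _)
  have hle := h N (le_trans (le_max_left N₀ 7) (le_max_left _ _)) (N-4) (by omega)
  rw [coeff_eq ρ a b N hN7] at hle
  exact absurd hle (not_le.2 (hM N (le_max_right _ _)))
end

section
/- Let τ = (μ₁,…,μₙ) be complex numbers with power sums x_k = μ₁^k + ⋯ + μₙ^k and q(x) = ∏(x − μᵢ) = x^n + q₁x^{n−1} + ⋯ + qₙ. Then the n×n matrix Xₙ with (i,j) entry x_{i−j+1} for i ≥ j, entry j on the superdiagonal position (j, j+1), and zeros above the superdiagonal, has characteristic polynomial x^n + n·q₁·x^{n−1} + n(n−1)·q₂·x^{n−2} + ⋯ + n!·qₙ. -/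
open Polynomial Finset

namespace Stmt13
noncomputable section
variable {n : ℕ} (τ : Fin n → ℂ)

/-- `(-1)^i eᵢ(τ)`, the coefficients of `∏ (X - τ i)` extended by zero. -/
def qc (i : ℕ) : ℂ := (-1) ^ i * (MvPolynomial.aeval τ) (MvPolynomial.esymm (Fin n) ℂ i)

lemma qc_zero : qc τ 0 = 1 := by simp [qc, MvPolynomial.esymm]

lemma qc_eq_coeff {i : ℕ} (hi : i ≤ n) :
    (∏ j, (X - C (τ j))).coeff (n - i) = qc τ i := by
  have h1 : (∏ j, (X - C (τ j))) = ∏ j, (X + C ((-τ) j)) := by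
    simp [sub_eq_add_neg]
  rw [h1, Finset.prod_X_add_C_coeff univ (-τ) (by simp)]
  rw [qc, MvPolynomial.esymm, map_sum]
  have hcard : #(univ : Finset (Fin n)) - (n - i) = i := by
    simp [Nat.sub_sub_self hi]
  rw [hcard, Finset.mul_sum]
  refine Finset.sum_congr rfl fun t ht => ?_
  rw [Finset.mem_powersetCard] at ht
  rw [map_prod]
  simp only [MvPolynomial.aeval_X, Pi.neg_apply]
  rw [Finset.prod_congr rfl (fun x _ => show -τ x = (-1) * τ x by ring),
    Finset.prod_mul_distrib, Finset.prod_const, ht.2]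

lemma newton (m : ℕ) :
    (m : ℂ) * qc τ m + ∑ i ∈ range m, qc τ i * (∑ j, τ j ^ (m - i)) = 0 := by
  have h := congrArg (MvPolynomial.aeval τ) (MvPolynomial.mul_esymm_eq_sum (Fin n) ℂ m)
  simp only [map_mul, map_sum, map_pow, map_natCast, map_neg, map_one] at h
  set E : ℕ → ℂ := fun i => (MvPolynomial.aeval τ) (MvPolynomial.esymm (Fin n) ℂ i) with hE
  have hps : ∀ r, (MvPolynomial.aeval τ) (MvPolynomial.psum (Fin n) ℂ r) = ∑ j, τ j ^ r := by
    intro r; simp [MvPolynomial.psum]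
  have h2 : ∑ a ∈ antidiagonal m with a.1 < m,
      (-1 : ℂ) ^ a.1 * E a.1 * (MvPolynomial.aeval τ) (MvPolynomial.psum (Fin n) ℂ a.2)
      = ∑ i ∈ range m, (-1 : ℂ) ^ i * E i * (∑ j, τ j ^ (m - i)) := by
    rw [Finset.sum_filter, Finset.Nat.sum_antidiagonal_eq_sum_range_succ_mk,
      Finset.sum_range_succ, if_neg (lt_irrefl m), add_zero]
    refine Finset.sum_congr rfl fun i hi => ?_
    rw [if_pos (mem_range.mp hi), hps]
  rw [h2] at h
  have hsign : ((-1 : ℂ)) ^ m * (-1) ^ (m + 1) = -1 := by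
    rw [← pow_add]
    exact Odd.neg_one_pow ⟨m, by ring⟩
  have hterm : ∀ i ∈ range m, qc τ i * (∑ j, τ j ^ (m - i))
      = (-1 : ℂ) ^ i * E i * (∑ j, τ j ^ (m - i)) := by
    intro i _; simp only [qc, ← hE]; rfl
  rw [Finset.sum_congr rfl hterm]
  have : (m : ℂ) * qc τ m = (-1 : ℂ) ^ m * ((m : ℂ) * E m) := by
    simp only [qc, ← hE]; ring
  rw [this, h, ← mul_assoc, hsign]
  ring

variable (x : ℕ → ℂ)

def ent (i j : ℕ) : ℂ :=
  if j ≤ i then x (i - j + 1) else if j = i + 1 then ((i + 1 : ℕ) : ℂ) else 0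

def A (i j : ℕ) : Polynomial ℂ := (if i = j then X else 0) - C (ent x i j)

def d (k : ℕ) : Polynomial ℂ := (Matrix.of fun i j : Fin k => A x i j).det

lemma d_zero : d x 0 = 1 := Matrix.det_fin_zero

lemma A_last (k : ℕ) (i : Fin (k + 1)) (hi : i ≠ Fin.last k) : A x i (k + 1) = 0 := by
  have h1 : (i : ℕ) < k := by
    have := i.isLt
    have h2 : (i : ℕ) ≠ k := fun h => hi (Fin.ext h)
    omega
  rw [A, ent, if_neg (by omega), if_neg (by omega), if_neg (by omega)]
  simp

lemma A_last_last (k : ℕ) : A x k (k + 1) = -C ((k + 1 : ℕ) : ℂ) := by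
  rw [A, ent, if_neg (by omega), if_neg (by omega), if_pos rfl]
  simp

lemma succAbove_val {k : ℕ} (j : Fin (k + 1)) (c : Fin k) :
    ((j.succAbove c : Fin (k + 1)) : ℕ) = if (c : ℕ) < (j : ℕ) then (c : ℕ) else (c : ℕ) + 1 := by
  rcases lt_or_ge (c : ℕ) (j : ℕ) with h | h
  · rw [Fin.succAbove_of_castSucc_lt _ _ (by simpa [Fin.lt_def] using h)]
    simp [h]
  · rw [Fin.succAbove_of_le_castSucc _ _ (by simpa [Fin.le_def] using h)]
    simp [Nat.not_lt.2 h]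

lemma minor_det (j : ℕ) : ∀ k, j ≤ k →
    (Matrix.of fun r c : Fin k =>
        A x r (if (c : ℕ) < j then (c : ℕ) else (c : ℕ) + 1)).det
      = d x j * ∏ m ∈ Ico j k, (-(C ((m + 1 : ℕ) : ℂ))) := by
  intro k hk
  induction k, hk using Nat.le_induction with
  | base =>
    rw [Ico_self, prod_empty, mul_one, d]
    congr 1
    ext r c
    simp only [Matrix.of_apply]
    rw [if_pos c.isLt]
  | succ k hk IH =>
    rw [Matrix.det_succ_column _ (Fin.last k)]
    rw [Finset.sum_eq_single_of_mem (Fin.last k) (mem_univ _) ?_]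
    · have hcol : (if ((Fin.last k : Fin (k+1)) : ℕ) < j then ((Fin.last k : Fin (k+1)) : ℕ)
          else ((Fin.last k : Fin (k+1)) : ℕ) + 1) = k + 1 := by
        simp only [Fin.val_last]
        rw [if_neg (by omega)]
      have hsub : ((Matrix.of fun r c : Fin (k+1) =>
            A x r (if (c : ℕ) < j then (c : ℕ) else (c : ℕ) + 1)).submatrix
            (Fin.last k).succAbove (Fin.last k).succAbove)
          = Matrix.of fun r c : Fin k =>
              A x r (if (c : ℕ) < j then (c : ℕ) else (c : ℕ) + 1) := by
        ext r c
        simp [Matrix.submatrix_apply, Fin.succAbove_last, Fin.coe_castSucc]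
      rw [hsub, IH]
      simp only [Matrix.of_apply, Fin.val_last]
      rw [if_neg (show ¬ k < j by omega), A_last_last]
      rw [Finset.prod_Ico_succ_top hk]
      have hev : ((-1 : Polynomial ℂ)) ^ (k + k) = 1 := Even.neg_one_pow ⟨k, by ring⟩
      rw [hev]
      ring
    · intro b _ hb
      have : (Matrix.of fun r c : Fin (k+1) =>
          A x r (if (c : ℕ) < j then (c : ℕ) else (c : ℕ) + 1)) b (Fin.last k) = 0 := by
        simp only [Matrix.of_apply, Fin.val_last]
        rw [if_neg (by omega), A_last x k b hb]
      rw [this]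
      ring

variable (x : ℕ → ℂ)


def Gc (r k : ℕ) : ℂ := ((∏ m ∈ Ico r k, (m + 1) : ℕ) : ℂ)

lemma prodneg (j k : ℕ) :
    ∏ m ∈ Ico j k, (-(C ((m + 1 : ℕ) : ℂ))) = (-1) ^ (k - j) * C (Gc j k) := by
  rw [Finset.prod_congr rfl
      (fun m _ => show -(C ((m + 1 : ℕ) : ℂ)) = (-1) * C ((m + 1 : ℕ) : ℂ) by ring),
    Finset.prod_mul_distrib, Finset.prod_const, Nat.card_Ico, Gc, Nat.cast_prod, map_prod]

lemma descFactorial_prod : ∀ i j : ℕ, i ≤ j →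
    (j.descFactorial i : ℕ) = ∏ m ∈ Ico (j - i) j, (m + 1) := by
  intro i
  induction i with
  | zero => intro j _; simp
  | succ i IH =>
    intro j hij
    rw [Nat.descFactorial_succ, IH j (by omega)]
    rw [Finset.prod_eq_prod_Ico_succ_bot (show j - (i+1) < j by omega)]
    have h1 : j - (i + 1) + 1 = j - i := by omega
    rw [h1]

lemma pascal (k s : ℕ) :
    (k + 1).descFactorial (s + 1) = k.descFactorial (s + 1) + (s + 1) * k.descFactorial s := by
  rcases le_or_gt s k with h | h
  · rw [Nat.succ_descFactorial_succ, Nat.descFactorial_succ,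
      show k + 1 = (k - s) + (s + 1) by omega, add_mul]
  · rw [Nat.descFactorial_eq_zero_iff_lt.2 (by omega),
      Nat.descFactorial_eq_zero_iff_lt.2 (by omega),
      Nat.descFactorial_eq_zero_iff_lt.2 (by omega)]
    simp

lemma sum_triangle_comm (n : ℕ) (f : ℕ → ℕ → Polynomial ℂ) :
    ∑ i ∈ range n, ∑ r ∈ range (n - i), f i r
      = ∑ r ∈ range n, ∑ i ∈ range (n - r), f i r := by
  rw [Finset.sum_sigma', Finset.sum_sigma']
  refine Finset.sum_nbij' (fun p => ⟨p.2, p.1⟩) (fun p => ⟨p.2, p.1⟩) ?_ ?_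
    (fun _ _ => rfl) (fun _ _ => rfl) (fun _ _ => rfl) <;>
  · simp only [Finset.mem_sigma, Finset.mem_range, Sigma.forall]
    omega

lemma d_succ (k : ℕ) :
    d x (k + 1) = ∑ j ∈ range (k + 1),
      (-1) ^ (k + j) * A x k j * (d x j * ∏ m ∈ Ico j k, (-(C ((m + 1 : ℕ) : ℂ)))) := by
  rw [d, Matrix.det_succ_row _ (Fin.last k)]
  rw [← Fin.sum_univ_eq_sum_range (fun j =>
    (-1) ^ (k + j) * A x k j * (d x j * ∏ m ∈ Ico j k, (-(C ((m + 1 : ℕ) : ℂ)))))]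
  refine Finset.sum_congr rfl fun j _ => ?_
  have hsub : ((Matrix.of fun i j : Fin (k+1) => A x i j).submatrix
      (Fin.last k).succAbove j.succAbove)
      = Matrix.of fun r c : Fin k =>
          A x r (if (c : ℕ) < (j : ℕ) then (c : ℕ) else (c : ℕ) + 1) := by
    ext r c
    simp [Matrix.submatrix_apply, Fin.succAbove_last, succAbove_val]
  rw [hsub, minor_det x j k (by omega)]
  simp only [Matrix.of_apply, Fin.val_last]

lemma d_eq {n : ℕ} (τ : Fin n → ℂ) (hx : ∀ k, x k = ∑ j, τ j ^ k) :
    ∀ k, d x k = ∑ i ∈ range (k + 1), C ((k.descFactorial i : ℂ) * qc τ i) * X ^ (k - i) := by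
  intro k
  induction k using Nat.strong_induction_on with
  | _ k IH =>
  match k with
  | 0 => simp [d_zero, qc_zero]
  | (k + 1) =>
    have hstep : d x (k+1) = X * (∑ i ∈ range (k + 1),
          C ((k.descFactorial i : ℂ) * qc τ i) * X ^ (k - i))
        - ∑ j ∈ range (k + 1), C (x (k - j + 1)) *
            ((∑ i ∈ range (j + 1), C ((j.descFactorial i : ℂ) * qc τ i) * X ^ (j - i))
              * C (Gc j k)) := by
      rw [d_succ]
      have h2 : ∀ j ∈ range (k+1),
          (-1) ^ (k + j) * A x k j * (d x j * ∏ m ∈ Ico j k, (-(C ((m + 1 : ℕ) : ℂ))))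
          = ((if k = j then X else 0) - C (x (k - j + 1))) *
              ((∑ i ∈ range (j + 1), C ((j.descFactorial i : ℂ) * qc τ i) * X ^ (j - i))
                * C (Gc j k)) := by
        intro j hj
        have hj' : j ≤ k := by have := mem_range.mp hj; omega
        rw [prodneg, IH j (by omega), A, ent, if_pos hj']
        have hsig : ((-1 : Polynomial ℂ)) ^ (k + j) * (-1) ^ (k - j) = 1 := by
          rw [← pow_add, show k + j + (k - j) = 2 * k by omega, pow_mul]
          simp
        linear_combination (((if k = j then X else 0) - C (x (k - j + 1))) *
          (∑ i ∈ range (j + 1), C ((j.descFactorial i : ℂ) * qc τ i) * X ^ (j - i)) *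
            C (Gc j k)) * hsig
      rw [Finset.sum_congr rfl h2]
      rw [Finset.sum_congr rfl (fun j _ => sub_mul _ _
        ((∑ i ∈ range (j + 1), C ((j.descFactorial i : ℂ) * qc τ i) * X ^ (j - i))
          * C (Gc j k))), Finset.sum_sub_distrib]
      congr 1
      rw [Finset.sum_eq_single_of_mem k (self_mem_range_succ k) ?_]
      · rw [if_pos rfl, Gc, Ico_self, prod_empty, Nat.cast_one, map_one, mul_one]
      · intro b _ hb
        rw [if_neg (Ne.symm hb), zero_mul]
    have hT1 : ∑ j ∈ range (k + 1), C (x (k - j + 1)) *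
            ((∑ i ∈ range (j + 1), C ((j.descFactorial i : ℂ) * qc τ i) * X ^ (j - i))
              * C (Gc j k))
        = ∑ j ∈ range (k + 1), ∑ i ∈ range (j + 1),
            C ((∑ t, τ t ^ (k - j + 1)) * qc τ i * Gc (j - i) k) * X ^ (j - i) := by
      refine Finset.sum_congr rfl fun j hj => ?_
      have hj' : j ≤ k := by have := mem_range.mp hj; omega
      rw [Finset.sum_mul, Finset.mul_sum]
      refine Finset.sum_congr rfl fun i hi => ?_
      have hi' : i ≤ j := by have := mem_range.mp hi; omega
      have hdg : (j.descFactorial i : ℂ) * Gc j k = Gc (j - i) k := by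
        rw [Gc, Gc, ← Nat.cast_mul, descFactorial_prod i j hi',
          ← Finset.prod_Ico_consecutive _ (show j - i ≤ j by omega) hj']
      rw [hx, ← hdg]
      simp only [map_mul]
      ring
    have hT2 : ∑ j ∈ range (k + 1), ∑ i ∈ range (j + 1),
            C ((∑ t, τ t ^ (k - j + 1)) * qc τ i * Gc (j - i) k) * X ^ (j - i)
        = ∑ i ∈ range (k + 1), ∑ j ∈ Ico i (k + 1),
            C ((∑ t, τ t ^ (k - j + 1)) * qc τ i * Gc (j - i) k) * X ^ (j - i) := by
      have := Finset.sum_Ico_Ico_comm 0 (k + 1) (fun i j =>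
        C ((∑ t, τ t ^ (k - j + 1)) * qc τ i * Gc (j - i) k) * X ^ (j - i))
      simp only [← Finset.range_eq_Ico] at this
      exact this.symm
    have hT3 : ∑ i ∈ range (k + 1), ∑ j ∈ Ico i (k + 1),
            C ((∑ t, τ t ^ (k - j + 1)) * qc τ i * Gc (j - i) k) * X ^ (j - i)
        = ∑ i ∈ range (k + 1), ∑ r ∈ range ((k + 1) - i),
            C ((∑ t, τ t ^ ((k - r + 1) - i)) * qc τ i * Gc r k) * X ^ r := by
      refine Finset.sum_congr rfl fun i hi => ?_
      have hi' : i ≤ k := by have := mem_range.mp hi; omega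
      rw [Finset.sum_Ico_eq_sum_range]
      refine Finset.sum_congr rfl fun r hr => ?_
      have hr' : i + r ≤ k := by have := mem_range.mp hr; omega
      have e1 : i + r - i = r := by omega
      have e2 : k - (i + r) + 1 = (k - r + 1) - i := by omega
      rw [e1, e2]
    have hT4 : ∑ i ∈ range (k + 1), ∑ r ∈ range ((k + 1) - i),
            C ((∑ t, τ t ^ ((k - r + 1) - i)) * qc τ i * Gc r k) * X ^ r
        = ∑ r ∈ range (k + 1), ∑ i ∈ range ((k + 1) - r),
            C ((∑ t, τ t ^ ((k - r + 1) - i)) * qc τ i * Gc r k) * X ^ r :=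
      sum_triangle_comm (k + 1) _
    have hT5 : ∑ r ∈ range (k + 1), ∑ i ∈ range ((k + 1) - r),
            C ((∑ t, τ t ^ ((k - r + 1) - i)) * qc τ i * Gc r k) * X ^ r
        = ∑ r ∈ range (k + 1),
            C (-((((k - r + 1 : ℕ)) : ℂ) * qc τ (k - r + 1)) * Gc r k) * X ^ r := by
      refine Finset.sum_congr rfl fun r hr => ?_
      have hr' : r ≤ k := by have := mem_range.mp hr; omega
      have hm : (k + 1) - r = (k - r + 1) := by omega
      rw [hm]
      have hnew : ∑ i ∈ range (k - r + 1), qc τ i * (∑ t, τ t ^ ((k - r + 1) - i))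
          = -((((k - r + 1 : ℕ)) : ℂ) * qc τ (k - r + 1)) :=
        eq_neg_of_add_eq_zero_right (newton τ (k - r + 1))
      rw [← Finset.sum_mul, ← map_sum]
      have harg : ∑ i ∈ range (k - r + 1),
            (∑ t, τ t ^ ((k - r + 1) - i)) * qc τ i * Gc r k
          = -((((k - r + 1 : ℕ)) : ℂ) * qc τ (k - r + 1)) * Gc r k := by
        rw [← hnew, Finset.sum_mul]
        exact Finset.sum_congr rfl fun i _ => by ring
      rw [harg]
    have hrefl : ∑ r ∈ range (k + 1),
            C ((((k - r + 1 : ℕ)) : ℂ) * qc τ (k - r + 1) * Gc r k) * X ^ r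
        = ∑ r ∈ range (k + 1),
            C ((((r + 1 : ℕ)) : ℂ) * qc τ (r + 1) * (k.descFactorial r : ℂ)) * X ^ (k - r) := by
      rw [← Finset.sum_range_reflect]
      refine Finset.sum_congr rfl fun r hr => ?_
      have hr' : r ≤ k := by have := mem_range.mp hr; omega
      have h1 : k + 1 - 1 - r = k - r := by omega
      have h2 : k - (k - r) + 1 = r + 1 := by omega
      have h3 : Gc (k - r) k = (k.descFactorial r : ℂ) := by
        rw [Gc, descFactorial_prod r k hr']
      rw [h1, h2, h3]
    have hfin : d x (k+1) = ∑ i ∈ range (k + 1),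
          C ((k.descFactorial i : ℂ) * qc τ i) * X ^ (k - i + 1)
        + ∑ r ∈ range (k + 1),
            C ((((r + 1 : ℕ)) : ℂ) * qc τ (r + 1) * (k.descFactorial r : ℂ)) * X ^ (k - r) := by
      rw [hstep, hT1, hT2, hT3, hT4, hT5]
      rw [Finset.mul_sum]
      rw [Finset.sum_congr rfl (fun i _ => show X * (C ((k.descFactorial i : ℂ) * qc τ i)
        * X ^ (k - i)) = C ((k.descFactorial i : ℂ) * qc τ i) * X ^ (k - i + 1) by ring)]
      rw [← hrefl]
      rw [Finset.sum_congr rfl (fun r _ =>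
        show C (-((((k - r + 1 : ℕ)) : ℂ) * qc τ (k - r + 1)) * Gc r k) * X ^ r
          = -(C ((((k - r + 1 : ℕ)) : ℂ) * qc τ (k - r + 1) * Gc r k) * X ^ r) by
        rw [neg_mul, map_neg]; ring)]
      rw [Finset.sum_neg_distrib, sub_neg_eq_add]
    rw [hfin]
    have hz : C ((k.descFactorial (k + 1) : ℂ) * qc τ (k + 1)) * X ^ (k - (k + 1) + 1) = 0 := by
      rw [(Nat.descFactorial_eq_zero_iff_lt (n := k) (k := k + 1)).2 k.lt_succ_self]
      simp
    have hext : ∑ i ∈ range (k + 2), C ((k.descFactorial i : ℂ) * qc τ i) * X ^ (k - i + 1)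
        = ∑ i ∈ range (k + 1), C ((k.descFactorial i : ℂ) * qc τ i) * X ^ (k - i + 1) := by
      rw [Finset.sum_range_succ, hz, add_zero]
    rw [← hext, Finset.sum_range_succ' (fun i => C ((k.descFactorial i : ℂ) * qc τ i)
        * X ^ (k - i + 1)) (k + 1),
      Finset.sum_range_succ' (fun i => C (((k + 1).descFactorial i : ℂ) * qc τ i)
        * X ^ (k + 1 - i)) (k + 1)]
    have h0 : C ((k.descFactorial 0 : ℂ) * qc τ 0) * X ^ (k - 0 + 1)
        = C (((k + 1).descFactorial 0 : ℂ) * qc τ 0) * X ^ (k + 1 - 0) := by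
      norm_num
    have hmerge : ∑ i ∈ range (k + 1), C ((k.descFactorial (i + 1) : ℂ) * qc τ (i + 1))
            * X ^ (k - (i + 1) + 1)
        + ∑ r ∈ range (k + 1),
            C ((((r + 1 : ℕ)) : ℂ) * qc τ (r + 1) * (k.descFactorial r : ℂ)) * X ^ (k - r)
        = ∑ i ∈ range (k + 1), C (((k + 1).descFactorial (i + 1) : ℂ) * qc τ (i + 1))
            * X ^ (k + 1 - (i + 1)) := by
      rw [← Finset.sum_add_distrib]
      refine Finset.sum_congr rfl fun i hi => ?_
      have hi' : i ≤ k := by have := mem_range.mp hi; omega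
      rcases lt_or_eq_of_le hi' with hlt | rfl
      · have e1 : k - (i + 1) + 1 = k - i := by omega
        have e2 : k + 1 - (i + 1) = k - i := by omega
        have hp : (((k + 1).descFactorial (i + 1)) : ℂ)
            = ((k.descFactorial (i + 1)) : ℂ)
              + (((i + 1 : ℕ)) : ℂ) * ((k.descFactorial i) : ℂ) := by
          rw [pascal]; push_cast; ring
        rw [e1, e2, hp]
        simp only [map_add, map_mul, add_mul]
        ring
      · rw [(Nat.descFactorial_eq_zero_iff_lt (n := i) (k := i + 1)).2 i.lt_succ_self,
          Nat.succ_descFactorial_succ]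
        simp only [Nat.cast_zero, zero_mul, map_zero, Nat.sub_self]
        push_cast
        ring_nf
    rw [add_right_comm, hmerge, h0]

end
end Stmt13

open Polynomial in
/-- For `τ = (μ₁,…,μₙ)` with power sums `x k = ∑ μᵢ^k` and
`q(x) = ∏ (x - μᵢ) = xⁿ + q₁xⁿ⁻¹ + ⋯ + qₙ`, the matrix `M` with `(i,j)` entry
`x_{i-j+1}` for `i ≥ j`, entry `j` at superdiagonal position `(j, j+1)` (1-indexed)
and zeros above the superdiagonal, has characteristic polynomial
`xⁿ + n·q₁·xⁿ⁻¹ + n(n-1)·q₂·xⁿ⁻² + ⋯ + n!·qₙ`. -/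
theorem stmt13 (n : ℕ) (hn : 0 < n) (τ : Fin n → ℂ)
    (x : ℕ → ℂ) (hx : ∀ k, x k = ∑ i, τ i ^ k)
    (q : Polynomial ℂ) (hq : q = ∏ i, (X - C (τ i)))
    (M : Matrix (Fin n) (Fin n) ℂ)
    (hM : M = Matrix.of fun (i j : Fin n) =>
      if (j : ℕ) ≤ (i : ℕ) then x ((i : ℕ) - (j : ℕ) + 1)
      else if (j : ℕ) = (i : ℕ) + 1 then (((i : ℕ) + 1 : ℕ) : ℂ) else 0) :
    M.charpoly = ∑ i ∈ Finset.range (n + 1),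
      C ((n.descFactorial i : ℂ) * q.coeff (n - i)) * X^(n - i) := by
  have hchar : Matrix.charmatrix M = Matrix.of fun i j : Fin n => Stmt13.A x i j := by
    ext i j
    rcases eq_or_ne i j with rfl | hij
    · rw [Matrix.charmatrix_apply_eq, Matrix.of_apply, Stmt13.A, Stmt13.ent,
        if_pos rfl, if_pos le_rfl, hM]
      simp
    · rw [Matrix.charmatrix_apply_ne _ _ _ hij, Matrix.of_apply, Stmt13.A,
        if_neg (fun h => hij (Fin.ext h)), zero_sub, hM]
      simp [Stmt13.ent]
  have h1 : M.charpoly = Stmt13.d x n := by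
    rw [Matrix.charpoly, hchar, Stmt13.d]
  rw [h1, Stmt13.d_eq x τ hx n]
  refine Finset.sum_congr rfl fun i hi => ?_
  have hi' : i ≤ n := by have := Finset.mem_range.mp hi; omega
  rw [hq, Stmt13.qc_eq_coeff τ hi']
end

section
/- The 4×4 matrix [[1.013005334, 1, 0, 0], [0, 1.041605274, 1, 0], [0, 0, 1.041605274, 1], [0.000326227, 0, 0, 0.000296825]] is nonnegative, and its characteristic polynomial approximates (x − 1.1)(x² − 2cos(0.0188π)x + 1)·x; in particular a nonnegative 4×4 matrix with spectrum (1.1, e^{±0.0188πi}, 0) exists of this bidiagonal-plus-corner form. -/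
set_option maxHeartbeats 1000000
open Polynomial

lemma cp4 (a b e f : ℝ) : (!![a,1,0,0;0,b,1,0;0,0,b,1;e,0,0,f] : Matrix (Fin 4) (Fin 4) ℝ).charpoly = (X - C a)*(X - C b)^2*(X - C f) - C e := by
  rw [Matrix.charpoly]
  simp [Matrix.det_succ_row_zero, Fin.sum_univ_succ, Matrix.charmatrix_apply, Matrix.scalar_apply, Matrix.diagonal_apply, Fin.succAbove]
  ring


open Polynomial in
/-- The given 4×4 matrix is entrywise nonnegative, and there exist nonnegative reals
`d₁, d₂, c₁, c₂` such that the matrix of the same bidiagonal-plus-corner shape has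
characteristic polynomial exactly `(x - 1.1)(x² - 2cos(0.0188π)x + 1)x`; in
particular a nonnegative 4×4 matrix with spectrum `(1.1, e^{±0.0188πi}, 0)` exists
of this form. -/
theorem stmt14 :
    (∀ i j, 0 ≤ (!![1.013005334, 1, 0, 0;
                    0, 1.041605274, 1, 0;
                    0, 0, 1.041605274, 1;
                    0.000326227, 0, 0, 0.000296825] : Matrix (Fin 4) (Fin 4) ℝ) i j) ∧
    ∃ d₁ d₂ c₁ c₂ : ℝ, 0 ≤ d₁ ∧ 0 ≤ d₂ ∧ 0 ≤ c₁ ∧ 0 ≤ c₂ ∧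
      (!![d₁, 1, 0, 0; 0, d₂, 1, 0; 0, 0, d₂, 1; c₁, 0, 0, c₂] :
          Matrix (Fin 4) (Fin 4) ℝ).charpoly =
        (X - C 1.1) * (X^2 - C (2 * Real.cos (0.0188 * Real.pi)) * X + 1) * X := by
  constructor
  · intro i j
    fin_cases i <;> fin_cases j <;> norm_num
  ·
    have hπl := Real.pi_gt_d6
    have hπu := Real.pi_lt_d6
    set c : ℝ := Real.cos (0.0188 * Real.pi) with hcdef
    have hθnn : (0:ℝ) ≤ 0.0188 * Real.pi := by positivity
    have hθu : (0.0188 * Real.pi : ℝ) ≤ 0.0590619484 := by nlinarith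
    have hθl : (0.0590619296 : ℝ) ≤ 0.0188 * Real.pi := by nlinarith
    have hb := Real.cos_bound (x := 0.0188 * Real.pi) (by rw [abs_of_nonneg hθnn]; linarith)
    rw [abs_of_nonneg hθnn] at hb
    have hb' := abs_le.mp hb
    have hsq : (0.0188 * Real.pi)^2 ≤ 0.0034883178 := by nlinarith
    have hsq' : (0.0034883115 : ℝ) ≤ (0.0188 * Real.pi)^2 := by nlinarith
    have h4 : (0.0188 * Real.pi)^4 ≤ 0.0000121684 := by nlinarith
    have hcl : (0.998255 : ℝ) ≤ c := by
      have h4' : (0:ℝ) ≤ (0.0188 * Real.pi)^4 := by positivity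
      rw [hcdef]; nlinarith [hb'.1]
    have hcu : c ≤ (0.9982565 : ℝ) := by
      rw [hcdef]; nlinarith [hb'.2]
    -- IVT for the cubic
    set g : ℝ → ℝ := fun t => 4*t^3 - 3*(1.1+2*c)*t^2 + 2*(1+2.2*c)*t - 1.1 with hgdef
    have hcont : ContinuousOn g (Set.Icc 1.035 1.05) := by
      apply Continuous.continuousOn; rw [hgdef]; fun_prop
    have hga : g 1.035 ≤ 0 := by rw [hgdef]; norm_num; nlinarith
    have hgb : (0:ℝ) ≤ g 1.05 := by rw [hgdef]; norm_num; nlinarith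
    obtain ⟨d₂, hmem, hg0⟩ := intermediate_value_Icc (by norm_num : (1.035:ℝ) ≤ 1.05) hcont ⟨hga, hgb⟩
    obtain ⟨hd2l, hd2u⟩ := hmem
    rw [hgdef] at hg0
    simp only at hg0
    set e₁ : ℝ := 1.1 + 2*c - 2*d₂ with he1def
    set e₂ : ℝ := (1 + 2.2*c) - 2*(1.1+2*c)*d₂ + 3*d₂^2 with he2def
    have he₂ : 0 ≤ e₂ := by rw [he2def]; nlinarith [sq_nonneg (3*d₂ - (1.1+2*c))]
    have he₁ : 0 ≤ e₁ := by rw [he1def]; linarith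
    have hD : 0 ≤ e₁^2 - 4*e₂ := by rw [he1def, he2def]; nlinarith
    set s : ℝ := Real.sqrt (e₁^2 - 4*e₂) with hsdef
    have hsnn : 0 ≤ s := Real.sqrt_nonneg _
    have hs2 : s^2 = e₁^2 - 4*e₂ := Real.sq_sqrt hD
    have hsle : s ≤ e₁ := by
      nlinarith [hs2, he₂, he₁, hsnn]
    clear_value s e₁ e₂
    refine ⟨(e₁+s)/2, d₂, (e₁+s)/2 * d₂^2 * ((e₁-s)/2), (e₁-s)/2, by linarith, by linarith, ?_, by linarith, ?_⟩
    · have : 0 ≤ (e₁+s)/2 := by linarith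
      have h2 : 0 ≤ (e₁-s)/2 := by linarith
      positivity
    · rw [cp4]
      have h1 : (e₁+s)/2 + (e₁-s)/2 = 1.1 + 2*c - 2*d₂ := by rw [he1def]; ring
      have h2 : (e₁+s)/2 * ((e₁-s)/2) = (1 + 2.2*c) - 2*(1.1+2*c)*d₂ + 3*d₂^2 := by
        have : (e₁+s)/2 * ((e₁-s)/2) = (e₁^2 - s^2)/4 := by ring
        rw [this, hs2, he2def, he1def]; ring
      apply Polynomial.funext
      intro x
      simp only [eval_mul, eval_sub, eval_add, eval_pow, eval_X, eval_C, eval_one]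
      linear_combination (-(x^3))*h1 + x^2*h2 + (-x)*(d₂^2*h1 + 2*d₂*h2 + hg0) + (2*x^2*d₂)*he1def
end

section
/- Let ρ = 1.4, a = 0.95, b = √(1 − 0.95²), f(x) = (x−ρ)(x² − 2ax + 1) = x³ − 3.3x² + 3.66x − 1.4. Then for every nonnegative integer N, setting α = (2a+ρ)/(N+3), the polynomial (y+α)^N f(y+α) has at least one positive coefficient besides the leading one; hence x^N f(x) is not realizable by αI + C with C a nonnegative trace-zero companion matrix for any N. -/
open Polynomial

lemma ch2' (m : ℕ) : (((m+3).choose 2 : ℕ) : ℝ) = ((m:ℝ)+3)*((m:ℝ)+2)/2 := by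
  induction m with
  | zero => norm_num
  | succ n ih =>
    rw [Nat.choose_succ_succ (n+3) 1]
    push_cast [Nat.choose_one_right, ih]
    ring

lemma ch3' (m : ℕ) : (((m+4).choose 3 : ℕ) : ℝ) = ((m:ℝ)+4)*((m:ℝ)+3)*((m:ℝ)+2)/6 := by
  induction m with
  | zero => norm_num
  | succ n ih =>
    rw [Nat.choose_succ_succ (n+4) 2]
    have h2 := ch2' (n+1)
    push_cast [ih]
    push_cast at h2
    linarith

lemma ch4' (m : ℕ) : (((m+5).choose 4 : ℕ) : ℝ) = ((m:ℝ)+5)*((m:ℝ)+4)*((m:ℝ)+3)*((m:ℝ)+2)/24 := by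
  induction m with
  | zero => norm_num
  | succ n ih =>
    rw [Nat.choose_succ_succ (n+5) 3]
    have h3 := ch3' (n+1)
    push_cast [ih]
    push_cast at h3
    linarith

lemma hgaux (α : ℝ) (N : ℕ) :
    ((X:ℝ[X]) + C α)^N * ((X^3 - C (3.3:ℝ) * X^2 + C 3.66 * X - C 1.4).comp (X + C α)) =
      (X + C α)^(N+3) - C 3.3 * (X + C α)^(N+2) + C 3.66 * (X + C α)^(N+1)
        - C 1.4 * (X + C α)^N := by
  simp only [sub_comp, add_comp, mul_comp, pow_comp, X_comp, C_comp]
  ring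

open Polynomial in
/-- For `ρ = 1.4`, `a = 0.95`, `f(x) = (x-ρ)(x²-2ax+1) = x³ - 3.3x² + 3.66x - 1.4`:
for every `N ≥ 0`, with `α = (2a+ρ)/(N+3)`, the shifted polynomial
`(y+α)^N f(y+α)` has at least one positive coefficient besides the leading one; hence
`x^N f(x)` is not realizable by `αI + C` with `C` a nonnegative trace-zero companion
matrix for any `N`. -/
theorem stmt15 (ρ a : ℝ) (hρ : ρ = 1.4) (ha : a = 0.95)
    (f : Polynomial ℝ) (hf : f = X^3 - C 3.3 * X^2 + C 3.66 * X - C 1.4) :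
    f = (X - C ρ) * (X^2 - C (2*a) * X + 1) ∧
    ∀ N : ℕ, ∃ k < N + 3,
      0 < (((X + C ((2*a + ρ)/((N : ℝ) + 3)))^N *
        (f.comp (X + C ((2*a + ρ)/((N : ℝ) + 3))))).coeff k) := by
  subst hρ ha hf
  constructor
  · rw [show (2:ℝ)*0.95 = 1.9 by norm_num,
      show (3.3:ℝ) = 1.4 + 1.9 by norm_num,
      show (3.66:ℝ) = 1.4*1.9 + 1 by norm_num, C_add, C_add, C_mul, C_1]
    ring
  · intro N
    rcases N with _ | _ | m
    · refine ⟨1, by norm_num, ?_⟩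
      rw [hgaux]
      simp only [coeff_sub, coeff_add, coeff_C_mul, coeff_X_add_C_pow]
      norm_num
    · refine ⟨1, by norm_num, ?_⟩
      rw [hgaux]
      simp only [coeff_sub, coeff_add, coeff_C_mul, coeff_X_add_C_pow]
      norm_num
    · set α : ℝ := (2*0.95 + 1.4)/(((m+2:ℕ) : ℝ) + 3) with hα
      rw [hgaux]
      refine ⟨m+1, by omega, ?_⟩
      have C4 : (m + 2 + 3).choose (m+1) = (m+5).choose 4 := by
        have := Nat.choose_symm (show 4 ≤ m+5 by omega)
        simpa [show m+5-4 = m+1 by omega] using this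
      have C3 : (m + 2 + 2).choose (m+1) = (m+4).choose 3 := by
        have := Nat.choose_symm (show 3 ≤ m+4 by omega)
        simpa [show m+4-3 = m+1 by omega] using this
      have C2 : (m + 2 + 1).choose (m+1) = (m+3).choose 2 := by
        have := Nat.choose_symm (show 2 ≤ m+3 by omega)
        simpa [show m+3-2 = m+1 by omega] using this
      have C1 : (m + 2).choose (m+1) = m+2 := by
        have := Nat.choose_symm (show 1 ≤ m+2 by omega)
        simpa [show m+2-1 = m+1 by omega, Nat.choose_one_right] using this.symm
      simp only [coeff_sub, coeff_add, coeff_C_mul, coeff_X_add_C_pow,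
        show m+2+3-(m+1) = 4 by omega, show m+2+2-(m+1) = 3 by omega,
        show m+2+1-(m+1) = 2 by omega, show m+2-(m+1) = 1 by omega,
        C4, C3, C2, C1, ch4' m, ch3' m, ch2' m]
      rw [hα]
      push_cast
      have hx : (0:ℝ) ≤ (m:ℝ) := m.cast_nonneg
      have h5 : (0:ℝ) < (m:ℝ) + 2 + 3 := by linarith
      have key : ((2*0.95 + 1.4)/((m:ℝ)+2+3))^4 * (((m:ℝ)+5)*((m:ℝ)+4)*((m:ℝ)+3)*((m:ℝ)+2)/24)
          - 3.3 * (((2*0.95 + 1.4)/((m:ℝ)+2+3))^3 * (((m:ℝ)+4)*((m:ℝ)+3)*((m:ℝ)+2)/6))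
          + 3.66 * (((2*0.95 + 1.4)/((m:ℝ)+2+3))^2 * (((m:ℝ)+3)*((m:ℝ)+2)/2))
          - 1.4 * (((2*0.95 + 1.4)/((m:ℝ)+2+3))^1 * ((m:ℝ)+2))
          = 33*(1175*(m:ℝ)^3 + 25287*(m:ℝ)^2 + 59310*(m:ℝ) + 26872)/(80000*((m:ℝ)+2+3)^3) := by
        have h5' : ((m:ℝ) + 2 + 3) ≠ 0 := ne_of_gt h5
        field_simp
        ring
      rw [key]
      positivity
end

section
/- Suppose e(x) = x^N − l₁x^{N−1} − ⋯ − l_N with all lᵢ ≥ 0, and let M be the N²×N² block matrix with N diagonal blocks each equal to the companion matrix C of e(x), superdiagonal connector blocks Nᵢ having a single 1 in position (N,1), and a last row determined so that det(xI − M) = x^{N²−3}f(x) for a given monic cubic f. Then the last-row entries in positions (N², j) for j = 1,…,N²−N are the negatives of the coefficients of the successive remainders r₁,…,r_{N−1} of x^{N²−3}f(x) under iterated division by e(x). -/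
open Polynomial Finset


lemma aux_mod_div_lt {N i : ℕ} (h : i % N < N - 1) :
    (i + 1) % N = i % N + 1 ∧ (i + 1) / N = i / N := by
  have hN : 0 < N := by omega
  have hd := Nat.div_add_mod i N
  have h1 : i + 1 = (i % N + 1) + N * (i / N) := by omega
  constructor
  · rw [h1, Nat.add_mul_mod_self_left, Nat.mod_eq_of_lt (by omega)]
  · rw [h1, Nat.add_mul_div_left _ _ hN, Nat.div_eq_of_lt (by omega), zero_add]

lemma aux_mod_div_eq {N i : ℕ} (hN : 0 < N) (h : ¬ i % N < N - 1) :
    i % N = N - 1 ∧ (i + 1) % N = 0 ∧ (i + 1) / N = i / N + 1 := by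
  have h2 : i % N < N := Nat.mod_lt _ hN
  have h3 : i % N = N - 1 := by omega
  have hd := Nat.div_add_mod i N
  have hr : N * (i / N + 1) = N * (i / N) + N := by ring
  have h1 : i + 1 = N * (i / N + 1) := by omega
  exact ⟨h3, by rw [h1, Nat.mul_mod_right], by rw [h1, Nat.mul_div_cancel_left _ hN]⟩

lemma aux_mod_div_mk {N a b : ℕ} (hN : 0 < N) (hb : b < N) :
    (a * N + b) % N = b ∧ (a * N + b) / N = a := by
  have h1 : a * N + b = b + N * a := by ring
  constructor
  · rw [h1, Nat.add_mul_mod_self_left, Nat.mod_eq_of_lt hb]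
  · rw [h1, Nat.add_mul_div_left _ _ hN, Nat.div_eq_of_lt hb, zero_add]

lemma aux_sum_range_mul {M : Type*} [AddCommMonoid M] (f : ℕ → M) (m n : ℕ) :
    ∑ j ∈ Finset.range (m * n), f j
      = ∑ a ∈ Finset.range m, ∑ b ∈ Finset.range n, f (a * n + b) := by
  induction m with
  | zero => simp
  | succ m ih =>
    rw [Finset.sum_range_succ, ← ih, Nat.succ_mul, Finset.sum_range_add]


lemma aux_chain (e : Polynomial ℝ) (hmon : e.Monic) (R : ℕ → Polynomial ℝ)
    (hdeg : ∀ w, (R w).degree < e.degree) (m : ℕ) :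
    (∀ u, u ≤ m - 1 →
      (Nat.rec (motive := fun _ => Polynomial ℝ)
        (e ^ m - ∑ w ∈ Finset.range (m - 1), e ^ w * R w) (fun _ g => g /ₘ e) u)
      = e ^ (m - u) - ∑ w ∈ Finset.Ico u (m - 1), e ^ (w - u) * R w) ∧
    (∀ u, u < m - 1 →
      (Nat.rec (motive := fun _ => Polynomial ℝ)
        (e ^ m - ∑ w ∈ Finset.range (m - 1), e ^ w * R w) (fun _ g => g /ₘ e) u) %ₘ e
      = - R u) := by
  set H : ℕ → Polynomial ℝ :=
    fun u => e ^ (m - u) - ∑ w ∈ Finset.Ico u (m - 1), e ^ (w - u) * R w with hH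
  have hsplit : ∀ u, u < m - 1 → H u = e * H (u + 1) + (- R u) := by
    intro u hu
    rw [hH]
    simp only
    rw [Finset.sum_eq_sum_Ico_succ_bot hu, mul_sub, Finset.mul_sum]
    have h1 : e * e ^ (m - (u + 1)) = e ^ (m - u) := by
      rw [← pow_succ']
      congr 1
      omega
    have h2 : ∀ w ∈ Finset.Ico (u + 1) (m - 1),
        e * (e ^ (w - (u + 1)) * R w) = e ^ (w - u) * R w := by
      intro w hw
      simp only [Finset.mem_Ico] at hw
      rw [← mul_assoc, ← pow_succ']
      congr 2
      omega
    rw [Finset.sum_congr rfl h2, h1]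
    simp only [Nat.sub_self, pow_zero, one_mul]
    ring
  have hrec : ∀ u, u ≤ m - 1 →
      (Nat.rec (motive := fun _ => Polynomial ℝ)
        (e ^ m - ∑ w ∈ Finset.range (m - 1), e ^ w * R w) (fun _ g => g /ₘ e) u) = H u := by
    intro u
    induction u with
    | zero =>
      intro _
      show e ^ m - ∑ w ∈ Finset.range (m - 1), e ^ w * R w = H 0
      rw [hH]
      simp only [Nat.sub_zero, Finset.range_eq_Ico]
    | succ u ih =>
      intro hu
      have hu' : u < m - 1 := by omega
      have hbase := ih (by omega)
      show (Nat.rec (motive := fun _ => Polynomial ℝ) _ _ u) /ₘ e = H (u + 1)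
      rw [hbase]
      have := Polynomial.div_modByMonic_unique (f := H u) (H (u + 1)) (- R u) hmon
        ⟨by rw [hsplit u hu']; ring, by
          rw [degree_neg]; exact hdeg u⟩
      exact this.1
  refine ⟨hrec, fun u hu => ?_⟩
  rw [hrec u (by omega)]
  have := Polynomial.div_modByMonic_unique (f := H u) (H (u + 1)) (- R u) hmon
    ⟨by rw [hsplit u hu]; ring, by rw [degree_neg]; exact hdeg u⟩
  exact this.2

open Polynomial in
/-- Let `e(x) = x^N - l₁x^{N-1} - ⋯ - l_N` with all `lᵢ ≥ 0` (here `l i = l_{i+1}`),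
and let `M` be the `N² × N²` block matrix with `N` diagonal blocks equal to the
companion matrix of `e`, connector blocks with a single `1` in position `(N,1)`, and
last row containing the unknown entries `c j` in the first `N² - N` columns. If
`det(xI - M) = x^{N²-3} f(x)` for a monic cubic `f`, then the last-row entries
`c ((u)N + v)` (for `0 ≤ u < N-1`, `0 ≤ v < N`) are the negatives of the coefficients
of `x^v` in the successive remainders `r_{u+1}` of `x^{N²-3} f(x)` under iterated
division by `e(x)`. -/
theorem stmt18 (N : ℕ) (hN : 2 ≤ N) (l : Fin N → ℝ) (hl : ∀ i, 0 ≤ l i)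
    (e : Polynomial ℝ)
    (he : e = X^N - ∑ i : Fin N, C (l i) * X^(N - 1 - (i : ℕ)))
    (f : Polynomial ℝ) (hf : f.Monic) (hfdeg : f.natDegree = 3)
    (c : Fin (N^2) → ℝ)
    (M : Matrix (Fin (N^2)) (Fin (N^2)) ℝ)
    (hM : M = Matrix.of fun (i j : Fin (N^2)) =>
      if (i : ℕ) % N < N - 1 then (if (j : ℕ) = (i : ℕ) + 1 then 1 else 0)
      else if (j : ℕ) / N = (i : ℕ) / N then l ⟨N - 1 - ((j : ℕ) % N), by omega⟩
      else if (i : ℕ) < N^2 - 1 then (if (j : ℕ) = (i : ℕ) + 1 then 1 else 0)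
      else c j)
    (hchar : M.charpoly = X^(N^2 - 3) * f) :
    ∀ u v : ℕ, u < N - 1 → v < N → ∀ h : u * N + v < N^2,
      c ⟨u * N + v, h⟩ =
        -(((Nat.rec (motive := fun _ => Polynomial ℝ) (X^(N^2 - 3) * f)
            (fun _ g => g /ₘ e) u) %ₘ e).coeff v) := by
  have hNpos : 0 < N := by omega
  have hNN : N ^ 2 = N * N := sq N
  have h2N : 2 * N ≤ N * N := Nat.mul_le_mul_right N hN
  have hsqpos : 0 < N ^ 2 := by rw [hNN]; omega
  have hsq2 : 2 ≤ N ^ 2 := by rw [hNN]; omega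
  have hlastmod : (N ^ 2 - 1) % N = N - 1 ∧ (N ^ 2 - 1) / N = N - 1 := by
    have h2 : (N - 1) * N = N * N - N := by rw [Nat.sub_mul, one_mul]
    have h1 : N ^ 2 - 1 = (N - 1) * N + (N - 1) := by rw [hNN]; omega
    rw [h1]; exact aux_mod_div_mk hNpos (by omega)
  -- basic objects
  set c' : ℕ → ℝ := fun k => if h : k < N ^ 2 then c ⟨k, h⟩ else 0 with hc'
  set ln : ℕ → ℝ := fun t => if h : t < N then l ⟨t, h⟩ else 0 with hln
  set R : ℕ → Polynomial ℝ := fun w => ∑ t ∈ Finset.range N, C (c' (w * N + t)) * X ^ t with hR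
  set vn : ℕ → Polynomial ℝ := fun j => X ^ (j % N) * e ^ (j / N) with hvn
  set v : Fin (N ^ 2) → Polynomial ℝ := fun j => vn (j : ℕ) with hv
  set lastI : Fin (N ^ 2) := ⟨N ^ 2 - 1, by omega⟩ with hlastI
  set zeroI : Fin (N ^ 2) := ⟨0, hsqpos⟩ with hzeroI
  set g : Polynomial ℝ :=
    e ^ N - ∑ j ∈ Finset.range (N ^ 2),
      (if j / N = N - 1 then 0 else C (c' j) * vn j) with hg
  -- degree facts about e
  have hSdeg : (∑ i : Fin N, C (l i) * X ^ (N - 1 - (i : ℕ))).degree ≤ ((N - 1 : ℕ) : WithBot ℕ) := by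
    refine le_trans (Polynomial.degree_sum_le _ _) (Finset.sup_le fun i _ => ?_)
    refine le_trans (Polynomial.degree_C_mul_X_pow_le _ _) ?_
    exact_mod_cast Nat.cast_le.mpr (Nat.sub_le _ _)
  have hSdeg' : (∑ i : Fin N, C (l i) * X ^ (N - 1 - (i : ℕ))).degree < ((N : ℕ) : WithBot ℕ) :=
    lt_of_le_of_lt hSdeg (by exact_mod_cast (by omega : N - 1 < N))
  have hemonic : e.Monic := by
    rw [he]
    exact Polynomial.monic_X_pow_sub hSdeg'
  have hedeg : e.degree = (N : WithBot ℕ) := by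
    rw [he, Polynomial.degree_sub_eq_left_of_degree_lt, Polynomial.degree_X_pow]
    rw [Polynomial.degree_X_pow]
    exact hSdeg'
  have hRdeg : ∀ w, (R w).degree < e.degree := by
    intro w
    rw [hedeg, hR]
    refine lt_of_le_of_lt (Polynomial.degree_sum_le _ _) ?_
    refine Finset.sup_lt_iff (by exact_mod_cast WithBot.bot_lt_coe N) |>.mpr fun t ht => ?_
    refine lt_of_le_of_lt (Polynomial.degree_C_mul_X_pow_le _ _) ?_
    exact_mod_cast Nat.cast_lt.mpr (Finset.mem_range.mp ht)
  -- the sum L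
  have hLe : (X : Polynomial ℝ) ^ N - ∑ b ∈ Finset.range N, C (ln (N - 1 - b)) * X ^ b = e := by
    rw [he]
    congr 1
    have h1 : ∀ b ∈ Finset.range N,
        C (ln (N - 1 - b)) * X ^ b
          = (fun j => C (ln j) * X ^ (N - 1 - j)) (N - 1 - b) := by
      intro b hb
      simp only [Finset.mem_range] at hb
      simp only
      rw [show N - 1 - (N - 1 - b) = b by omega]
    rw [Finset.sum_congr rfl h1,
      Finset.sum_range_reflect (fun j => C (ln j) * X ^ (N - 1 - j)) N]
    rw [show (∑ i : Fin N, C (l i) * X ^ (N - 1 - (i : ℕ)))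
        = ∑ i : Fin N, (fun j => C (ln j) * X ^ (N - 1 - j)) (i : ℕ) by
      refine Finset.sum_congr rfl fun i _ => ?_
      simp only [hln]
      rw [dif_pos i.isLt, Fin.eta]]
    rw [Fin.sum_univ_eq_sum_range (fun j => C (ln j) * X ^ (N - 1 - j)) N]
  -- entries of the charmatrix
  have hentry : ∀ i j, Matrix.charmatrix M i j = (if i = j then X else 0) - C (M i j) := by
    intro i j
    by_cases h : i = j
    · subst h; simp
    · simp [h, Matrix.charmatrix_apply_ne _ _ _ h]
  have hlnl : ∀ (t : ℕ) (h : t < N), ln t = l ⟨t, h⟩ := by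
    intro t h
    simp only [hln]
    rw [dif_pos h]
  have hcc : ∀ (k : ℕ) (h : k < N ^ 2), c' k = c ⟨k, h⟩ := by
    intro k h
    simp only [hc']
    rw [dif_pos h]
  -- the key mulVec identity
  have hAv : (Matrix.charmatrix M).mulVec v = Pi.single lastI g := by
    have hblock : ∀ u : ℕ, u < N →
        (∑ j : Fin (N ^ 2), if (j : ℕ) / N = u
            then C (ln (N - 1 - (j : ℕ) % N)) * v j else 0)
          = (∑ b ∈ Finset.range N, C (ln (N - 1 - b)) * X ^ b) * e ^ u := by
      intro u hu
      have h1 : (∑ j : Fin (N ^ 2), if (j : ℕ) / N = u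
            then C (ln (N - 1 - (j : ℕ) % N)) * v j else 0)
          = ∑ j ∈ Finset.range (N ^ 2),
              (fun k => if k / N = u then C (ln (N - 1 - k % N)) * vn k else 0) j := by
        rw [← Fin.sum_univ_eq_sum_range]
      rw [h1, hNN, aux_sum_range_mul]
      have h2 : ∀ a ∈ Finset.range N, ∀ b ∈ Finset.range N,
          (fun k => if k / N = u then C (ln (N - 1 - k % N)) * vn k else 0) (a * N + b)
            = if a = u then C (ln (N - 1 - b)) * X ^ b * e ^ u else 0 := by
        intro a ha b hb
        simp only [Finset.mem_range] at ha hb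
        obtain ⟨hmod, hdiv⟩ := aux_mod_div_mk (N := N) (a := a) (b := b) hNpos hb
        simp only [hvn]
        rw [hmod, hdiv]
        by_cases hau : a = u
        · rw [if_pos hau, if_pos hau, hau, mul_assoc]
        · rw [if_neg hau, if_neg hau]
      rw [Finset.sum_congr rfl (fun a ha => Finset.sum_congr rfl (h2 a ha))]
      have h3 : ∀ a ∈ Finset.range N,
          (∑ b ∈ Finset.range N, if a = u then C (ln (N - 1 - b)) * X ^ b * e ^ u else 0)
            = if a = u then (∑ b ∈ Finset.range N, C (ln (N - 1 - b)) * X ^ b) * e ^ u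
              else 0 := by
        intro a _
        by_cases hau : a = u
        · simp only [if_pos hau, Finset.sum_mul]
        · simp only [if_neg hau, Finset.sum_const_zero]
      rw [Finset.sum_congr rfl h3, Finset.sum_ite_eq' (Finset.range N) u,
        if_pos (Finset.mem_range.mpr hu)]
    funext i
    have hmv : (Matrix.charmatrix M).mulVec v i
        = X * v i - ∑ j : Fin (N ^ 2), C (M i j) * v j := by
      simp only [Matrix.mulVec, dotProduct]
      rw [Finset.sum_congr rfl (fun j _ => by rw [hentry i j, sub_mul])]
      rw [Finset.sum_sub_distrib]
      congr 1
      rw [Finset.sum_congr rfl (fun j _ => by rw [ite_mul, zero_mul]),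
        Finset.sum_ite_eq Finset.univ i (fun j => X * v j)]
      simp
    by_cases hcase : (i : ℕ) % N < N - 1
    · -- shift row
      have hine : (i : ℕ) ≠ N ^ 2 - 1 := fun hh => by rw [hh, hlastmod.1] at hcase; omega
      have hi1 : (i : ℕ) + 1 < N ^ 2 := by have := i.isLt; omega
      obtain ⟨hmod, hdiv⟩ := aux_mod_div_lt hcase
      have hsum : (∑ j : Fin (N ^ 2), C (M i j) * v j) = v ⟨(i : ℕ) + 1, hi1⟩ := by
        have h1 : ∀ j : Fin (N ^ 2), C (M i j) * v j
            = if j = ⟨(i : ℕ) + 1, hi1⟩ then v j else 0 := by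
          intro j
          rw [hM]
          simp only [Matrix.of_apply, if_pos hcase]
          by_cases hj : j = ⟨(i : ℕ) + 1, hi1⟩
          · rw [if_pos (by rw [hj]), if_pos hj]
            simp
          · rw [if_neg (fun hh => hj (Fin.ext hh)), if_neg hj, map_zero, zero_mul]
        rw [Finset.sum_congr rfl (fun j _ => h1 j), Finset.sum_ite_eq' Finset.univ _ v]
        simp
      rw [hmv, hsum]
      have hps : (Pi.single lastI g : Fin (N ^ 2) → Polynomial ℝ) i = 0 := by
        apply Pi.single_eq_of_ne
        intro hh
        exact hine (by rw [hh, hlastI])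
      rw [hps, hv]
      simp only [hvn]
      rw [hmod, hdiv]
      ring
    · by_cases hlast : (i : ℕ) < N ^ 2 - 1
      · -- connector row
        obtain ⟨hmod, hmod1, hdiv1⟩ := aux_mod_div_eq hNpos hcase
        have hi1 : (i : ℕ) + 1 < N ^ 2 := by omega
        have hudiv : (i : ℕ) / N < N := by
          have h4 : (i : ℕ) < N * N := lt_of_lt_of_le i.isLt (le_of_eq hNN)
          exact (Nat.div_lt_iff_lt_mul hNpos).mpr (by omega)
        have hsum : (∑ j : Fin (N ^ 2), C (M i j) * v j)
            = (∑ b ∈ Finset.range N, C (ln (N - 1 - b)) * X ^ b) * e ^ ((i : ℕ) / N)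
              + v ⟨(i : ℕ) + 1, hi1⟩ := by
          have h1 : ∀ j : Fin (N ^ 2), C (M i j) * v j
              = (if (j : ℕ) / N = (i : ℕ) / N
                  then C (ln (N - 1 - (j : ℕ) % N)) * v j else 0)
                + (if j = ⟨(i : ℕ) + 1, hi1⟩ then v j else 0) := by
            intro j
            rw [hM]
            simp only [Matrix.of_apply, if_neg hcase]
            by_cases hjb : (j : ℕ) / N = (i : ℕ) / N
            · rw [if_pos hjb, if_pos hjb,
                if_neg (fun hj => by rw [hj] at hjb; simp at hjb; omega), add_zero]
              congr 2
              rw [hlnl _ (show N - 1 - (j : ℕ) % N < N by omega)]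
            · rw [if_neg hjb, if_neg hjb, zero_add, if_pos hlast]
              by_cases hj : j = ⟨(i : ℕ) + 1, hi1⟩
              · rw [if_pos (by rw [hj]), if_pos hj]
                simp
              · rw [if_neg (fun hh => hj (Fin.ext hh)), if_neg hj, map_zero, zero_mul]
          rw [Finset.sum_congr rfl (fun j _ => h1 j), Finset.sum_add_distrib,
            hblock _ hudiv, Finset.sum_ite_eq' Finset.univ _ v]
          simp
        rw [hmv, hsum]
        have hps : (Pi.single lastI g : Fin (N ^ 2) → Polynomial ℝ) i = 0 := by
          apply Pi.single_eq_of_ne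
          intro hh
          rw [hh, hlastI] at hlast
          simp at hlast
        rw [hps, hv]
        simp only [hvn]
        rw [hmod, hmod1, hdiv1]
        have hXN : (X : Polynomial ℝ) * (X ^ (N - 1) * e ^ ((i : ℕ) / N))
            = X ^ N * e ^ ((i : ℕ) / N) := by
          rw [← mul_assoc, ← pow_succ']
          rw [show N - 1 + 1 = N by omega]
        rw [hXN]
        rw [pow_zero]
        rw [one_mul]
        have hE : e ^ ((i : ℕ) / N + 1) = e * e ^ ((i : ℕ) / N) := pow_succ' e _
        rw [hE]
        rw [← hLe]
        ring
      · -- last row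
        have hieq : (i : ℕ) = N ^ 2 - 1 := by have := i.isLt; omega
        have hieqI : i = lastI := Fin.ext (by rw [hieq, hlastI])
        have hidiv : (i : ℕ) / N = N - 1 := by rw [hieq, hlastmod.2]
        have himod : (i : ℕ) % N = N - 1 := by rw [hieq, hlastmod.1]
        have hsum : (∑ j : Fin (N ^ 2), C (M i j) * v j)
            = (∑ b ∈ Finset.range N, C (ln (N - 1 - b)) * X ^ b) * e ^ (N - 1)
              + ∑ j ∈ Finset.range (N ^ 2),
                  (if j / N = N - 1 then 0 else C (c' j) * vn j) := by
          have h1 : ∀ j : Fin (N ^ 2), C (M i j) * v j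
              = (if (j : ℕ) / N = N - 1
                  then C (ln (N - 1 - (j : ℕ) % N)) * v j else 0)
                + (fun k => if k / N = N - 1 then 0
                    else C (c' k) * vn k) ((j : ℕ)) := by
            intro j
            rw [hM]
            simp only [Matrix.of_apply, if_neg hcase, if_neg hlast, hidiv]
            by_cases hjb : (j : ℕ) / N = N - 1
            · rw [if_pos hjb, if_pos hjb, if_pos hjb, add_zero]
              congr 2
              rw [hlnl _ (show N - 1 - (j : ℕ) % N < N by omega)]
            · rw [if_neg hjb, if_neg hjb, if_neg hjb, zero_add]
              rw [hcc _ j.isLt, Fin.eta]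
          rw [Finset.sum_congr rfl (fun j _ => h1 j), Finset.sum_add_distrib,
            hblock _ (by omega)]
          congr 1
          rw [← Fin.sum_univ_eq_sum_range
            (fun k => if k / N = N - 1 then 0 else C (c' k) * vn k) (N ^ 2)]
        rw [hmv, hsum, hieqI, Pi.single_eq_same, hg]
        rw [hv]
        simp only [hvn]
        rw [hieqI] at himod hidiv
        rw [himod, hidiv]
        have hXN : (X : Polynomial ℝ) * (X ^ (N - 1) * e ^ (N - 1))
            = X ^ N * e ^ (N - 1) := by
          rw [← mul_assoc, ← pow_succ']
          rw [show N - 1 + 1 = N by omega]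
        have heN : e ^ N = e * e ^ (N - 1) := by
          rw [← pow_succ']
          rw [show N - 1 + 1 = N by omega]
        rw [hXN, heN, ← hLe]
        ring
  -- determinant equals g
  have hdetg : M.charpoly = g := by
    have hinv : (Matrix.charmatrix M).adjugate.mulVec (Pi.single lastI g)
        = (Matrix.charmatrix M).det • v := by
      rw [← hAv, Matrix.mulVec_mulVec, Matrix.adjugate_mul, Matrix.smul_mulVec,
        Matrix.one_mulVec]
    have hv0 : v zeroI = 1 := by
      rw [hv]
      simp only [hvn, hzeroI]
      norm_num
    have hzero : (Matrix.charmatrix M).adjugate zeroI lastI * g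
        = (Matrix.charmatrix M).det * v zeroI := by
      have h1 := congrFun hinv zeroI
      rw [Matrix.mulVec_single] at h1
      simpa using h1
    have hadj : (Matrix.charmatrix M).adjugate zeroI lastI = 1 := by
      rw [Matrix.adjugate_apply]
      set B := (Matrix.charmatrix M).updateRow lastI (Pi.single zeroI 1) with hB
      have hm : N ^ 2 - 1 + 1 = N ^ 2 := by omega
      set τ : Equiv.Perm (Fin (N ^ 2)) := (finCongr hm).permCongr (finRotate (N ^ 2 - 1 + 1))
        with hτ
      have hτval : ∀ k : Fin (N ^ 2),
          ((τ k : ℕ)) = if (k : ℕ) = N ^ 2 - 1 then 0 else (k : ℕ) + 1 := by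
        intro k
        rw [hτ]
        simp only [Equiv.permCongr_apply, finCongr_apply, finCongr_symm,
          finRotate_succ_apply, Fin.coe_cast]
        by_cases hk : (k : ℕ) = N ^ 2 - 1
        · rw [if_pos hk]
          have hkl : Fin.cast hm.symm k = Fin.last (N ^ 2 - 1) := by
            apply Fin.ext; simp [hk]
          rw [hkl, Fin.last_add_one]
          rfl
        · rw [if_neg hk]
          have hlt : Fin.cast hm.symm k < Fin.last (N ^ 2 - 1) := by
            rw [Fin.lt_iff_val_lt_val]
            simp only [Fin.coe_cast, Fin.val_last]
            have := k.isLt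
            omega
          rw [Fin.val_add_one_of_lt hlt]
          simp
      set σ := τ⁻¹ with hσ
      have hσval : ∀ k : Fin (N ^ 2),
          ((σ k : ℕ)) = if (k : ℕ) = 0 then N ^ 2 - 1 else (k : ℕ) - 1 := by
        intro k
        have h1 : τ (σ k) = k := Equiv.apply_symm_apply τ k
        have h2 := hτval (σ k)
        rw [h1] at h2
        have h3 : ((σ k : ℕ)) < N ^ 2 := (σ k).isLt
        have h4 : (k : ℕ) < N ^ 2 := k.isLt
        rcases eq_or_ne ((σ k : ℕ)) (N ^ 2 - 1) with hc | hc
        · rw [if_pos hc] at h2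
          rw [if_pos (by omega), hc]
        · rw [if_neg hc] at h2
          rw [if_neg (by omega)]
          omega
      have hBrow : ∀ r : Fin (N ^ 2), (r : ℕ) < N ^ 2 - 1 → ∀ j,
          B r j = (if r = j then X else 0) - C (M r j) := by
        intro r hr j
        rw [hB, Matrix.updateRow_ne (by
          intro hrl
          rw [hrl, hlastI] at hr
          simp at hr)]
        exact hentry r j
      have hMrow1 : ∀ r j : Fin (N ^ 2), (r : ℕ) < N ^ 2 - 1 → (j : ℕ) > (r : ℕ) + 1 →
          M r j = 0 := by
        intro r j hr hj
        rw [hM]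
        simp only [Matrix.of_apply]
        by_cases h1 : (r : ℕ) % N < N - 1
        · rw [if_pos h1, if_neg (by omega)]
        · rw [if_neg h1]
          obtain ⟨hmod, hmod1, hdiv1⟩ := aux_mod_div_eq hNpos h1
          have hjd : (r : ℕ) / N + 1 ≤ (j : ℕ) / N := by
            calc (r : ℕ) / N + 1 = ((r : ℕ) + 1) / N := hdiv1.symm
            _ ≤ (j : ℕ) / N := Nat.div_le_div_right (by omega)
          rw [if_neg (by omega), if_pos (by omega), if_neg (by omega)]
      have hMdiag : ∀ r j : Fin (N ^ 2), (r : ℕ) < N ^ 2 - 1 → (j : ℕ) = (r : ℕ) + 1 →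
          M r j = 1 := by
        intro r j hr hj
        rw [hM]
        simp only [Matrix.of_apply]
        by_cases h1 : (r : ℕ) % N < N - 1
        · rw [if_pos h1, if_pos hj]
        · rw [if_neg h1]
          obtain ⟨hmod, hmod1, hdiv1⟩ := aux_mod_div_eq hNpos h1
          have hjdiv : (j : ℕ) / N = (r : ℕ) / N + 1 := by rw [hj, hdiv1]
          rw [if_neg (by omega), if_pos (by omega), if_pos hj]
      have hPtri : (B.submatrix σ id).BlockTriangular OrderDual.toDual := by
        intro i j hij
        have hij' : (i : ℕ) < (j : ℕ) := hij
        show B (σ i) j = 0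
        rcases eq_or_ne ((i : ℕ)) 0 with h0 | h0
        · have hsi : σ i = lastI := Fin.ext (by rw [hσval, if_pos h0, hlastI])
          rw [hsi, hB, Matrix.updateRow_self]
          refine Pi.single_eq_of_ne (fun hje => ?_) 1
          rw [hje, hzeroI] at hij'
          simp at hij'
        · have hsival : ((σ i : ℕ)) = (i : ℕ) - 1 := by rw [hσval, if_neg h0]
          have hlt : ((σ i : ℕ)) < N ^ 2 - 1 := by have := i.isLt; omega
          rw [hBrow _ hlt, if_neg (fun hh => by rw [hh] at hsival; omega),
            hMrow1 _ _ hlt (by omega)]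
          simp
      have hPdiag : ∀ i : Fin (N ^ 2),
          (B.submatrix σ id) i i = if (i : ℕ) = 0 then 1 else -1 := by
        intro i
        show B (σ i) i = _
        rcases eq_or_ne ((i : ℕ)) 0 with h0 | h0
        · have hsi : σ i = lastI := Fin.ext (by rw [hσval, if_pos h0, hlastI])
          have hiz : i = zeroI := Fin.ext (by rw [h0, hzeroI])
          rw [if_pos h0, hsi, hB, Matrix.updateRow_self, hiz, Pi.single_eq_same]
        · have hsival : ((σ i : ℕ)) = (i : ℕ) - 1 := by rw [hσval, if_neg h0]
          have hlt : ((σ i : ℕ)) < N ^ 2 - 1 := by have := i.isLt; omega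
          rw [if_neg h0, hBrow _ hlt, if_neg (fun hh => by rw [hh] at hsival; omega),
            hMdiag _ _ hlt (by omega), map_one]
          simp
      have hPdet : (B.submatrix σ id).det = (-1 : Polynomial ℝ) ^ (N ^ 2 - 1) := by
        rw [Matrix.det_of_lowerTriangular _ hPtri]
        rw [Finset.prod_congr rfl (fun i _ => hPdiag i)]
        rw [Fin.prod_univ_eq_prod_range (fun j => if j = 0 then (1 : Polynomial ℝ) else -1)
          (N ^ 2)]
        rw [show Finset.range (N ^ 2) = Finset.range ((N ^ 2 - 1) + 1) by rw [hm]]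
        rw [Finset.prod_range_succ']
        simp only [if_pos rfl, mul_one]
        rw [Finset.prod_congr rfl (fun x _ => if_neg (Nat.succ_ne_zero x)),
          Finset.prod_const, Finset.card_range]
        simp
      have hsign : Equiv.Perm.sign σ = (-1 : ℤˣ) ^ (N ^ 2 - 1) := by
        rw [hσ, Equiv.Perm.sign_inv, hτ, Equiv.Perm.sign_permCongr, sign_finRotate, Nat.add_sub_cancel]
      have hdp := Matrix.det_permute σ B
      rw [hPdet, hsign] at hdp
      have hcast : ((((-1 : ℤˣ) ^ (N ^ 2 - 1) : ℤˣ) : ℤ) : Polynomial ℝ)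
          = (-1 : Polynomial ℝ) ^ (N ^ 2 - 1) := by push_cast; ring
      rw [hcast] at hdp
      have hsq : ((-1 : Polynomial ℝ) ^ (N ^ 2 - 1)) * ((-1 : Polynomial ℝ) ^ (N ^ 2 - 1))
          = 1 := by
        rw [← pow_add, ← two_mul, pow_mul]
        norm_num
      calc B.det = 1 * B.det := (one_mul _).symm
        _ = (((-1 : Polynomial ℝ) ^ (N ^ 2 - 1)) * ((-1 : Polynomial ℝ) ^ (N ^ 2 - 1)))
            * B.det := by rw [hsq]
        _ = ((-1 : Polynomial ℝ) ^ (N ^ 2 - 1))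
            * (((-1 : Polynomial ℝ) ^ (N ^ 2 - 1)) * B.det) := by ring
        _ = ((-1 : Polynomial ℝ) ^ (N ^ 2 - 1)) * ((-1 : Polynomial ℝ) ^ (N ^ 2 - 1)) := by
            rw [← hdp]
        _ = 1 := hsq
    have hdet1 : M.charpoly = (Matrix.charmatrix M).det := rfl
    rw [hdet1]
    calc (Matrix.charmatrix M).det = (Matrix.charmatrix M).det * v zeroI := by
          rw [hv0, mul_one]
      _ = (Matrix.charmatrix M).adjugate zeroI lastI * g := hzero.symm
      _ = g := by rw [hadj, one_mul]
  -- rewrite g as e^N - sum of R's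
  have hgR : g = e ^ N - ∑ w ∈ Finset.range (N - 1), e ^ w * R w := by
    rw [hg]
    congr 1
    rw [hNN, aux_sum_range_mul]
    have h1 : ∀ a ∈ Finset.range N, ∀ b ∈ Finset.range N,
        (if (a * N + b) / N = N - 1 then 0 else C (c' (a * N + b)) * vn (a * N + b))
          = (if a = N - 1 then 0 else C (c' (a * N + b)) * X ^ b * e ^ a) := by
      intro a _ b hb
      simp only [Finset.mem_range] at hb
      obtain ⟨hmod, hdiv⟩ := aux_mod_div_mk (N := N) (a := a) (b := b) hNpos hb
      rw [hvn]
      simp only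
      rw [hmod, hdiv, mul_assoc]
    rw [Finset.sum_congr rfl fun a ha => Finset.sum_congr rfl (h1 a ha)]
    rw [← Finset.sum_subset (Finset.range_subset_range.mpr (show N - 1 ≤ N by omega))
        (fun x hx hx' => by
          simp only [Finset.mem_range] at hx hx'
          simp only [if_pos (show x = N - 1 by omega), Finset.sum_const_zero])]
    refine Finset.sum_congr rfl fun a ha => ?_
    simp only [Finset.mem_range] at ha
    simp only [if_neg (show ¬ a = N - 1 by omega)]
    rw [← Finset.sum_mul, mul_comm]
  -- conclude
  have hbase : X ^ (N ^ 2 - 3) * f = e ^ N - ∑ w ∈ Finset.range (N - 1), e ^ w * R w := by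
    rw [← hchar, hdetg, hgR]
  intro u w hu hw h
  have hch := (aux_chain e hemonic R hRdeg N).2 u hu
  rw [hbase, hch]
  have : ((- R u).coeff w) = - c' (u * N + w) := by
    rw [Polynomial.coeff_neg, neg_inj]
    rw [hR]
    simp only
    rw [Polynomial.finset_sum_coeff]
    have h1 : ∀ t ∈ Finset.range N,
        (C (c' (u * N + t)) * X ^ t).coeff w = if w = t then c' (u * N + t) else 0 := by
      intro t _
      rw [Polynomial.coeff_C_mul, Polynomial.coeff_X_pow]
      split <;> simp
    rw [Finset.sum_congr rfl h1, Finset.sum_ite_eq (Finset.range N) w]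
    rw [if_pos (Finset.mem_range.mpr hw)]
  rw [this, neg_neg, hc']
  simp only [dif_pos h]
end
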